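/- Let N : ℝ^d ⊃ U → ℝ^d be a C¹ unit vector field defined near x ∈ M ⊂ ℝ^d that is normal to M along M, where M has reach r > 0. Then for any tangent vector Y ∈ T_x M with Y ≠ 0, ⟨Y, D_Y N⟩ / ⟨Y, Y⟩ ≤ 1/r, where D is the standard directional derivative in ℝ^d. -/

import Mathlib

set_option maxHeartbeats 1000000


open Set Metric

/-- M has reach at least r: every point at distance < r from M has a unique nearest point. -/
def HasReach {d : ℕ} (M : Set (EuclideanSpace ℝ (Fin d))) (r : ℝ) : Prop :=
  ∀ p : EuclideanSpace ℝ (Fin d), infDist p M < r →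
    ∃! m : EuclideanSpace ℝ (Fin d), m ∈ M ∧ dist p m = infDist p M

namespace Reach14

open Filter Asymptotics
open scoped RealInnerProductSpace Topology

variable {d : ℕ}

/-- Selection of a nearest point (junk value if too far). -/
noncomputable def sel (M : Set (EuclideanSpace ℝ (Fin d))) (r : ℝ)
    (hreach : HasReach M r) (p : EuclideanSpace ℝ (Fin d)) : EuclideanSpace ℝ (Fin d) :=
  if h : infDist p M < r then (hreach p h).exists.choose else p

lemma sel_spec {M : Set (EuclideanSpace ℝ (Fin d))} {r : ℝ}
    (hreach : HasReach M r) {p : EuclideanSpace ℝ (Fin d)}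
    (hp : infDist p M < r) :
    sel M r hreach p ∈ M ∧ dist p (sel M r hreach p) = infDist p M := by
  rw [sel, dif_pos hp]; exact (hreach p hp).exists.choose_spec

lemma nearest_unique {M : Set (EuclideanSpace ℝ (Fin d))} {r : ℝ}
    (hreach : HasReach M r) {p m₁ m₂ : EuclideanSpace ℝ (Fin d)}
    (hp : infDist p M < r) (h₁ : m₁ ∈ M) (e₁ : dist p m₁ = infDist p M)
    (h₂ : m₂ ∈ M) (e₂ : dist p m₂ = infDist p M) : m₁ = m₂ :=
  (hreach p hp).unique ⟨h₁, e₁⟩ ⟨h₂, e₂⟩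

lemma closed_of_reach {M : Set (EuclideanSpace ℝ (Fin d))} {r : ℝ}
    (hM : M.Nonempty) (hr : 0 < r) (hreach : HasReach M r) : IsClosed M := by
  refine isClosed_of_closure_subset fun p hp => ?_
  have h0 : infDist p M = 0 := (mem_closure_iff_infDist_zero hM).1 hp
  obtain ⟨m, hm, hd⟩ := (hreach p (by rw [h0]; exact hr)).exists
  rw [h0] at hd
  rwa [show p = m by rwa [dist_eq_zero] at hd]

lemma le_infDist' {M : Set (EuclideanSpace ℝ (Fin d))} (hM : M.Nonempty)
    {p : EuclideanSpace ℝ (Fin d)} {c : ℝ} (h : ∀ y ∈ M, c ≤ dist p y) :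
    c ≤ infDist p M := by
  by_contra hc
  push_neg at hc
  obtain ⟨y, hy, hlt⟩ := (infDist_lt_iff hM).1 hc
  exact absurd (h y hy) (not_le.2 hlt)

/-- trivial ball inequality at a nearest point. -/
lemma two_inner_le {M : Set (EuclideanSpace ℝ (Fin d))}
    {q m b : EuclideanSpace ℝ (Fin d)} (hb : b ∈ M)
    (hqm : dist q m = infDist q M) : 2 * ⟪q - m, b - m⟫ ≤ ‖b - m‖ ^ 2 := by
  have h1 : infDist q M ≤ dist q b := infDist_le_dist_of_mem hb
  have h2 : ‖q - m‖ ≤ ‖q - b‖ := by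
    rw [← dist_eq_norm, ← dist_eq_norm, hqm]; exact h1
  have h3 : ‖q - b‖ ^ 2 = ‖q - m‖ ^ 2 - 2 * ⟪q - m, b - m⟫ + ‖b - m‖ ^ 2 := by
    have he : q - b = (q - m) - (b - m) := by abel
    rw [he, norm_sub_sq_real]
  nlinarith [norm_nonneg (q - m), norm_nonneg (q - b)]


lemma le_of_sq_le_sq' {c x : ℝ} (hc : 0 ≤ c) (hx : 0 ≤ x) (h : c ^ 2 ≤ x ^ 2) :
    c ≤ x := by nlinarith [sq_nonneg (x - c), sq_nonneg (x + c)]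

/-- Uniform second-order estimate from unique nearest points, by compactness. -/
lemma claim {M : Set (EuclideanSpace ℝ (Fin d))} {r : ℝ} (hM : M.Nonempty)
    (hMc : IsClosed M) (hreach : HasReach M r)
    (q₀ : EuclideanSpace ℝ (Fin d)) (d₀ ρ ε : ℝ) (hd₀ : 0 < d₀) (hρr : ρ < r)
    (hε : 0 < ε) :
    ∃ h₀ > 0, ∀ q : EuclideanSpace ℝ (Fin d), dist q q₀ ≤ ρ → d₀ ≤ infDist q M →
      infDist q M ≤ ρ → ∀ b ∈ M, ∀ m ∈ M, dist q m = infDist q M →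
        h₀ * ‖b - m‖ ^ 2 ≤ infDist q M * (‖q - b‖ ^ 2 - infDist q M ^ 2)
          + ε * infDist q M * h₀ := by
  by_contra hcon
  push_neg at hcon
  set k₀ : ℕ := ⌈4 / d₀⌉₊ with hk₀def
  have hk₀4 : (4 : ℝ) ≤ ((k₀ : ℝ) + 1) * d₀ := by
    have h1 : (4 / d₀ : ℝ) ≤ (k₀ : ℝ) := Nat.le_ceil _
    have h2 := (div_le_iff₀ hd₀).1 h1
    nlinarith
  have H : ∀ k : ℕ, ∃ q b m : EuclideanSpace ℝ (Fin d),
      (dist q q₀ ≤ ρ ∧ d₀ ≤ infDist q M ∧ infDist q M ≤ ρ) ∧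
      b ∈ M ∧ m ∈ M ∧ dist q m = infDist q M ∧
      infDist q M * (‖q - b‖ ^ 2 - infDist q M ^ 2)
        + ε * infDist q M * (1 / ((k : ℝ) + (k₀ : ℝ) + 1))
        < (1 / ((k : ℝ) + (k₀ : ℝ) + 1)) * ‖b - m‖ ^ 2 := by
    intro k
    have hpos : (0:ℝ) < 1 / ((k : ℝ) + (k₀ : ℝ) + 1) := by positivity
    obtain ⟨q, h1, h2, h3, b, hb, m, hm, hdm, hlt⟩ := hcon _ hpos
    exact ⟨q, b, m, ⟨h1, h2, h3⟩, hb, hm, hdm, hlt⟩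
  choose q b m hK hb hm hdm hlt using H
  have hδlb : ∀ k, d₀ ≤ infDist (q k) M := fun k => (hK k).2.1
  have hδub : ∀ k, infDist (q k) M ≤ ρ := fun k => (hK k).2.2
  have hdq : ∀ k, dist (q k) q₀ ≤ ρ := fun k => (hK k).1
  have hρ0 : 0 < ρ := lt_of_lt_of_le hd₀ (le_trans (hδlb 0) (hδub 0))
  have hhk : ∀ k : ℕ, (0:ℝ) < 1 / ((k : ℝ) + (k₀ : ℝ) + 1) := by
    intro k; positivity
  have hEX0 : ∀ k, 0 ≤ ‖q k - b k‖ ^ 2 - infDist (q k) M ^ 2 := by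
    intro k
    have h1 : infDist (q k) M ≤ dist (q k) (b k) := infDist_le_dist_of_mem (hb k)
    rw [dist_eq_norm] at h1
    have h2 : (0:ℝ) ≤ infDist (q k) M := infDist_nonneg
    nlinarith
  have hXbig : ∀ k, ε * d₀ ≤ ‖b k - m k‖ ^ 2 := by
    intro k
    have h1 := hlt k
    have h2 := hEX0 k
    have h3 := hδlb k
    have h4 := hhk k
    have h5 : (0:ℝ) ≤ infDist (q k) M := le_trans hd₀.le h3
    have e1 : 0 ≤ infDist (q k) M * (‖q k - b k‖ ^ 2 - infDist (q k) M ^ 2) :=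
      mul_nonneg h5 h2
    have e2 : ε * d₀ * (1 / ((k : ℝ) + (k₀ : ℝ) + 1)) ≤
        ε * infDist (q k) M * (1 / ((k : ℝ) + (k₀ : ℝ) + 1)) :=
      mul_le_mul_of_nonneg_right (mul_le_mul_of_nonneg_left h3 hε.le) h4.le
    have e3 : (1 / ((k : ℝ) + (k₀ : ℝ) + 1)) * (ε * d₀) <
        (1 / ((k : ℝ) + (k₀ : ℝ) + 1)) * ‖b k - m k‖ ^ 2 := by linarith
    exact le_of_lt ((mul_lt_mul_iff_right₀ h4).1 e3)
  have hEXb : ∀ k, ‖q k - b k‖ ^ 2 - infDist (q k) M ^ 2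
      ≤ 8 * ρ ^ 2 * (1 / ((k : ℝ) + (k₀ : ℝ) + 1)) / d₀ ∧ ‖b k - m k‖ ≤ 3 * ρ := by
    intro k
    have hh0 : (0:ℝ) < 1 / ((k : ℝ) + (k₀ : ℝ) + 1) := hhk k
    have hlt1 := hlt k
    have hEXnn := hEX0 k
    have hδρ := hδub k
    have hδd₀ := hδlb k
    set h : ℝ := 1 / ((k : ℝ) + (k₀ : ℝ) + 1) with hh
    set δ : ℝ := infDist (q k) M with hδ
    set EX : ℝ := ‖q k - b k‖ ^ 2 - δ ^ 2 with hEXdef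
    have hδ0 : 0 < δ := lt_of_lt_of_le hd₀ hδd₀
    have hstep : δ * EX < h * ‖b k - m k‖ ^ 2 := by
      have h2 : 0 < ε * δ * h := mul_pos (mul_pos hε hδ0) hh0
      linarith
    have hX : ‖b k - m k‖ ≤ ‖q k - b k‖ + δ := by
      have h1 : ‖b k - m k‖ ≤ ‖b k - q k‖ + ‖q k - m k‖ := by
        have he : b k - m k = (b k - q k) + (q k - m k) := by abel
        rw [he]; exact norm_add_le _ _
      have h2 : ‖q k - m k‖ = δ := by rw [← dist_eq_norm, hdm k]
      have h3 : ‖b k - q k‖ = ‖q k - b k‖ := by rw [norm_sub_rev]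
      rw [h2, h3] at h1; exact h1
    have hX2 : ‖b k - m k‖ ^ 2 ≤ 4 * ρ ^ 2 + 2 * EX := by
      have h1 : ‖q k - b k‖ ^ 2 = δ ^ 2 + EX := by rw [hEXdef]; ring
      have h6 : ‖b k - m k‖ ^ 2 ≤ (‖q k - b k‖ + δ) ^ 2 :=
        pow_le_pow_left₀ (norm_nonneg _) hX 2
      have h7 : δ ^ 2 ≤ ρ ^ 2 := pow_le_pow_left₀ hδ0.le hδρ 2
      nlinarith [sq_nonneg (‖q k - b k‖ - δ)]
    have hhd : h * 4 ≤ d₀ := by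
      rw [hh, div_mul_eq_mul_div, div_le_iff₀ (by positivity)]
      have hkk : ((k₀ : ℝ) + 1) ≤ ((k : ℝ) + (k₀ : ℝ) + 1) := by
        have h5 : (0:ℝ) ≤ (k : ℝ) := Nat.cast_nonneg k
        linarith
      nlinarith
    have hEXle : EX ≤ 2 * ρ ^ 2 := by
      have h1 : δ * EX < h * (4 * ρ ^ 2 + 2 * EX) :=
        lt_of_lt_of_le hstep (mul_le_mul_of_nonneg_left hX2 (le_of_lt hh0))
      have h2 : 0 ≤ (δ - h * 4) * EX :=
        mul_nonneg (by linarith) hEXnn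
      nlinarith [hh0.le, mul_pos hh0 hρ0]
    have hX8 : ‖b k - m k‖ ^ 2 ≤ 8 * ρ ^ 2 := by linarith
    have hXle : ‖b k - m k‖ ≤ 3 * ρ := by
      nlinarith [norm_nonneg (b k - m k), hρ0.le, sq_nonneg (‖b k - m k‖ - 3 * ρ),
        sq_nonneg (‖b k - m k‖ + 3 * ρ)]
    refine ⟨?_, hXle⟩
    rw [le_div_iff₀ hd₀]
    have e1 : d₀ * EX ≤ δ * EX := mul_le_mul_of_nonneg_right hδd₀ hEXnn
    have e2 : h * ‖b k - m k‖ ^ 2 ≤ h * (8 * ρ ^ 2) :=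
      mul_le_mul_of_nonneg_left hX8 (le_of_lt hh0)
    linarith
  have hmem : ∀ k, (q k, b k, m k) ∈
      (closedBall q₀ ρ ×ˢ closedBall q₀ (5 * ρ) ×ˢ closedBall q₀ (5 * ρ)) := by
    intro k
    refine ⟨by simpa [mem_closedBall] using hdq k, ?_, ?_⟩
    · have h1 : dist (b k) q₀ ≤ dist (b k) (m k) + dist (m k) (q k) + dist (q k) q₀ :=
        dist_triangle4 _ _ _ _
      have h2 : dist (b k) (m k) ≤ 3 * ρ := by
        rw [dist_eq_norm]; exact (hEXb k).2
      have h3 : dist (m k) (q k) ≤ ρ := by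
        rw [dist_comm, hdm k]; exact hδub k
      simp only [mem_closedBall]
      linarith [hdq k]
    · have h3 : dist (m k) (q k) ≤ ρ := by
        rw [dist_comm, hdm k]; exact hδub k
      have h4 : dist (m k) q₀ ≤ dist (m k) (q k) + dist (q k) q₀ := dist_triangle _ _ _
      simp only [mem_closedBall]
      have h5 : (0:ℝ) < ρ := hρ0
      linarith [hdq k]
  obtain ⟨⟨q', b', m'⟩, hS, φ, hφ, hconv⟩ :=
    (((isCompact_closedBall q₀ ρ).prod ((isCompact_closedBall q₀ (5 * ρ)).prod
      (isCompact_closedBall q₀ (5 * ρ)))).tendsto_subseq hmem)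
  rw [nhds_prod_eq, Filter.tendsto_prod_iff'] at hconv
  obtain ⟨htq, hconv2⟩ := hconv
  rw [nhds_prod_eq, Filter.tendsto_prod_iff'] at hconv2
  obtain ⟨htb, htm⟩ := hconv2
  simp only [Function.comp] at htq htb htm
  have htδ : Filter.Tendsto (fun k => infDist (q (φ k)) M) Filter.atTop
      (nhds (infDist q' M)) := ((continuous_infDist_pt M).tendsto q').comp htq
  have hδ'ub : infDist q' M ≤ ρ :=
    le_of_tendsto_of_tendsto' htδ tendsto_const_nhds (fun k => hδub (φ k))
  have hδ'lb : d₀ ≤ infDist q' M :=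
    le_of_tendsto_of_tendsto' tendsto_const_nhds htδ (fun k => hδlb (φ k))
  have hδ'r : infDist q' M < r := lt_of_le_of_lt hδ'ub hρr
  have hb' : b' ∈ M := hMc.mem_of_tendsto htb (Filter.Eventually.of_forall (fun k => hb (φ k)))
  have hm' : m' ∈ M := hMc.mem_of_tendsto htm (Filter.Eventually.of_forall (fun k => hm (φ k)))
  have hdm' : dist q' m' = infDist q' M := by
    have h1 : Filter.Tendsto (fun k => dist (q (φ k)) (m (φ k))) Filter.atTop
        (nhds (dist q' m')) := htq.dist htm
    have h2 : (fun k => dist (q (φ k)) (m (φ k))) = fun k => infDist (q (φ k)) M := by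
      funext k; exact hdm (φ k)
    rw [h2] at h1
    exact tendsto_nhds_unique h1 htδ
  have hEXtend : Filter.Tendsto
      (fun k => ‖q (φ k) - b (φ k)‖ ^ 2 - infDist (q (φ k)) M ^ 2)
      Filter.atTop (nhds (‖q' - b'‖ ^ 2 - infDist q' M ^ 2)) :=
    ((htq.sub htb).norm.pow 2).sub (htδ.pow 2)
  have hEXzero : Filter.Tendsto
      (fun k => ‖q (φ k) - b (φ k)‖ ^ 2 - infDist (q (φ k)) M ^ 2)
      Filter.atTop (nhds 0) := by
    have hg : Filter.Tendsto (fun k : ℕ => 8 * ρ ^ 2 / d₀ * (1 / ((k : ℝ) + 1)))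
        Filter.atTop (nhds 0) := by
      have h1 := tendsto_one_div_add_atTop_nhds_zero_nat.const_mul (8 * ρ ^ 2 / d₀)
      simpa using h1
    apply squeeze_zero (fun k => hEX0 (φ k)) _ hg
    intro k
    refine le_trans (hEXb (φ k)).1 ?_
    have h1 : (k : ℝ) + 1 ≤ ((φ k : ℝ) + (k₀ : ℝ) + 1) := by
      have h2 : k ≤ φ k := hφ.le_apply
      have h3 : (k:ℝ) ≤ (φ k : ℝ) := by exact_mod_cast h2
      have h4 : (0:ℝ) ≤ (k₀ : ℝ) := Nat.cast_nonneg _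
      linarith
    have h5 : (1:ℝ) / ((φ k : ℝ) + (k₀ : ℝ) + 1) ≤ 1 / ((k : ℝ) + 1) :=
      one_div_le_one_div_of_le (by positivity) h1
    calc 8 * ρ ^ 2 * (1 / ((φ k : ℝ) + (k₀ : ℝ) + 1)) / d₀
        ≤ 8 * ρ ^ 2 * (1 / ((k : ℝ) + 1)) / d₀ :=
          (div_le_div_iff_of_pos_right hd₀).2 (mul_le_mul_of_nonneg_left h5 (by positivity))
      _ = 8 * ρ ^ 2 / d₀ * (1 / ((k : ℝ) + 1)) := by ring
  have hEXeq : ‖q' - b'‖ ^ 2 - infDist q' M ^ 2 = 0 := tendsto_nhds_unique hEXtend hEXzero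
  have hdb' : dist q' b' = infDist q' M := by
    have hge : infDist q' M ≤ ‖q' - b'‖ := by
      have h1 := infDist_le_dist_of_mem (x := q') hb'
      rwa [dist_eq_norm] at h1
    have hprod : (‖q' - b'‖ - infDist q' M) * (‖q' - b'‖ + infDist q' M) = 0 := by
      nlinarith
    rw [dist_eq_norm]
    rcases mul_eq_zero.1 hprod with h | h
    · linarith
    · have h1 : (0:ℝ) ≤ ‖q' - b'‖ := norm_nonneg _
      have h2 : (0:ℝ) ≤ infDist q' M := infDist_nonneg
      linarith
  have hbm : b' = m' := nearest_unique hreach hδ'r hb' hdb' hm' hdm'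
  have hlim : ε * d₀ ≤ ‖b' - m'‖ ^ 2 :=
    le_of_tendsto_of_tendsto' tendsto_const_nhds ((htb.sub htm).norm.pow 2)
      (fun k => hXbig (φ k))
  rw [hbm, sub_self, norm_zero] at hlim
  have := mul_pos hε hd₀
  norm_num at hlim
  linarith


/-- Euler polygon along the gradient of the distance function. -/
noncomputable def polySeq (M : Set (EuclideanSpace ℝ (Fin d))) (r : ℝ)
    (hreach : HasReach M r) (h : ℝ) (q : EuclideanSpace ℝ (Fin d)) :
    ℕ → EuclideanSpace ℝ (Fin d)
  | 0 => q
  | (k+1) =>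
    polySeq M r hreach h q k +
      (h / infDist (polySeq M r hreach h q k) M) •
        (polySeq M r hreach h q k - sel M r hreach (polySeq M r hreach h q k))

lemma poly {M : Set (EuclideanSpace ℝ (Fin d))} {r : ℝ} (hM : M.Nonempty)
    (hMc : IsClosed M) (hreach : HasReach M r) (q : EuclideanSpace ℝ (Fin d))
    (hd₀ : 0 < infDist q M) (ρ : ℝ) (hρ : infDist q M < ρ) (hρr : ρ < r)
    (ε : ℝ) (hε : 0 < ε) (hεd : ε ≤ infDist q M) :
    ∃ q' : EuclideanSpace ℝ (Fin d), dist q' q ≤ ρ - infDist q M ∧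
      ∀ b ∈ M, infDist q M * ρ - ε * (ρ - infDist q M) ≤ infDist q M * dist q' b := by
  set d₀ := infDist q M with hd₀def
  set Δ := ρ - d₀ with hΔdef
  have hΔ0 : 0 < Δ := by rw [hΔdef]; linarith
  have hρ0 : 0 < ρ := lt_trans hd₀ hρ
  obtain ⟨h₀, hh₀, hclaim⟩ := claim hM hMc hreach q d₀ ρ ε hd₀ hρr hε
  obtain ⟨n, hn⟩ := exists_nat_ge (max (Δ / h₀) (max (Δ * ε / d₀ ^ 2) 1))
  have hna : Δ / h₀ ≤ (n:ℝ) := le_trans (le_max_left _ _) hn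
  have hnb : Δ * ε / d₀ ^ 2 ≤ (n:ℝ) := le_trans (le_trans (le_max_left _ _) (le_max_right _ _)) hn
  have hn1 : (1:ℝ) ≤ (n:ℝ) := le_trans (le_trans (le_max_right _ _) (le_max_right _ _)) hn
  have hn0 : (0:ℝ) < (n:ℝ) := by linarith
  set h := Δ / (n:ℝ) with hhdef
  have hh0 : 0 < h := div_pos hΔ0 hn0
  have hnh : (n:ℝ) * h = Δ := by rw [hhdef]; field_simp
  have hhh₀ : h ≤ h₀ := by
    rw [hhdef, div_le_iff₀ hn0]
    rw [div_le_iff₀ hh₀] at hna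
    linarith
  have hεh : ε * h ≤ d₀ ^ 2 := by
    have h2 : ε * h = Δ * ε / (n:ℝ) := by rw [hhdef]; ring
    rw [h2, div_le_iff₀ hn0]
    rw [div_le_iff₀ (by positivity : (0:ℝ) < d₀ ^ 2)] at hnb
    linarith [hnb]
  have main : ∀ k : ℕ, k ≤ n →
      dist (polySeq M r hreach h q k) q ≤ (k:ℝ) * h ∧
      infDist (polySeq M r hreach h q k) M ≤ d₀ + (k:ℝ) * h ∧
      d₀ * (d₀ + (k:ℝ) * h) - ε * ((k:ℝ) * h) ≤ d₀ * infDist (polySeq M r hreach h q k) M := by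
    intro k
    induction k with
    | zero =>
      intro _
      refine ⟨by simp [polySeq], ?_, ?_⟩
      · show infDist q M ≤ d₀ + (0:ℕ) * h
        rw [← hd₀def]
        simp
      · show d₀ * (d₀ + ((0:ℕ):ℝ) * h) - ε * (((0:ℕ):ℝ) * h) ≤ d₀ * infDist q M
        rw [← hd₀def]
        simp
    | succ k ih =>
      intro hk1
      have hkn : k ≤ n := Nat.le_of_succ_le hk1
      obtain ⟨ih1, ih2, ih3⟩ := ih hkn
      set p := polySeq M r hreach h q k with hpdef
      set D := infDist p M with hDdef
      have hkh0 : 0 ≤ (k:ℝ) * h := by positivity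
      have hkhΔ : (k:ℝ) * h ≤ Δ := by
        have hc : (k:ℝ) ≤ (n:ℝ) := by exact_mod_cast hkn
        calc (k:ℝ) * h ≤ (n:ℝ) * h := mul_le_mul_of_nonneg_right hc hh0.le
        _ = Δ := hnh
      have hk1h : ((k:ℝ)+1) * h ≤ Δ := by
        have hc : ((k:ℝ)+1) ≤ (n:ℝ) := by exact_mod_cast hk1
        calc ((k:ℝ)+1) * h ≤ (n:ℝ) * h := mul_le_mul_of_nonneg_right hc hh0.le
        _ = Δ := hnh
      have hDub : D ≤ ρ := by rw [hΔdef] at hkhΔ; linarith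
      have hDlb : d₀ ≤ D := by
        have e1 : ε * ((k:ℝ)*h) ≤ d₀ * ((k:ℝ)*h) := mul_le_mul_of_nonneg_right hεd hkh0
        have e2 : d₀ * d₀ ≤ d₀ * D := by linarith [ih3, e1]
        exact le_of_mul_le_mul_left e2 hd₀
      have hD0 : 0 < D := lt_of_lt_of_le hd₀ hDlb
      have hDr : D < r := lt_of_le_of_lt hDub hρr
      obtain ⟨hmM, hmdist⟩ := sel_spec hreach (p := p) hDr
      set m := sel M r hreach p with hmdef
      have hpm : ‖p - m‖ = D := by rw [← dist_eq_norm, hmdist]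
      have hQ : polySeq M r hreach h q (k+1) = p + (h / D) • (p - m) := rfl
      have hstepd : dist (polySeq M r hreach h q (k+1)) p = h := by
        rw [hQ, dist_eq_norm]
        have e : p + (h/D) • (p - m) - p = (h/D) • (p - m) := by abel
        rw [e, norm_smul, hpm, Real.norm_eq_abs, abs_of_pos (div_pos hh0 hD0)]
        field_simp
      have hlow : ∀ b ∈ M, (D + h - ε*h/d₀) ≤ dist (polySeq M r hreach h q (k+1)) b := by
        intro b hb
        have hEXnn : 0 ≤ ‖p - b‖^2 - D^2 := by
          have e1 : D ≤ dist p b := infDist_le_dist_of_mem hb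
          rw [dist_eq_norm] at e1
          have e2 := pow_le_pow_left₀ hD0.le e1 2
          linarith
        have hpq : dist p q ≤ ρ := by
          rw [hΔdef] at hkhΔ
          linarith
        have hcl := hclaim p hpq hDlb hDub b hb m hmM hmdist
        rw [← hDdef] at hcl
        have c1 : h * ‖b - m‖^2 ≤ D * (‖p - b‖^2 - D^2) + ε * D * h := by
          have r1 : (0:ℝ) ≤ h / h₀ := by positivity
          have r2 := mul_le_mul_of_nonneg_left hcl r1
          have hh₀ne : h₀ ≠ 0 := ne_of_gt hh₀
          have r3 : h / h₀ * (h₀ * ‖b - m‖^2) = h * ‖b - m‖^2 := by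
            field_simp
          have r4 : h/h₀ * (D * (‖p - b‖^2 - D^2) + ε * D * h₀)
              = h/h₀ * (D * (‖p - b‖^2 - D^2)) + ε * D * h := by field_simp
          have r5 : h/h₀ * (D * (‖p - b‖^2 - D^2)) ≤ D * (‖p - b‖^2 - D^2) := by
            apply mul_le_of_le_one_left (mul_nonneg hD0.le hEXnn)
            exact (div_le_one hh₀).2 hhh₀
          rw [r3, r4] at r2
          linarith [r2, r5]
        have c6 : h/D * ‖b - m‖^2 ≤ (‖p - b‖^2 - D^2) + ε*h := by
          rw [div_mul_eq_mul_div, div_le_iff₀ hD0]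
          linarith [c1]
        have e0 : polySeq M r hreach h q (k+1) - b = (p - b) + (h/D) • (p - m) := by
          rw [hQ]; abel
        have e1 : ‖polySeq M r hreach h q (k+1) - b‖^2
            = ‖p - b‖^2 + 2 * ((h/D) * ⟪p - b, p - m⟫) + (h/D)^2 * D^2 := by
          rw [e0, norm_add_sq_real, real_inner_smul_right, norm_smul,
            Real.norm_eq_abs, abs_of_pos (div_pos hh0 hD0), hpm]
          ring
        have e2 : ⟪p - b, p - m⟫ = D^2 + ⟪p - m, m - b⟫ := by
          rw [real_inner_comm]
          have e2' : p - b = (p - m) + (m - b) := by abel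
          nth_rewrite 1 [e2']
          rw [inner_add_right, real_inner_self_eq_norm_sq, hpm]
        have e3 : -(‖b - m‖^2 / 2) ≤ ⟪p - m, m - b⟫ := by
          have e3' := two_inner_le hb hmdist
          have e4 : ⟪p - m, m - b⟫ = -⟪p - m, b - m⟫ := by
            have e4' : m - b = -(b - m) := by abel
            rw [e4', inner_neg_right]
          rw [e4]
          linarith
        have f1 : (h/D)^2 * D^2 = h^2 := by field_simp
        have f2 : (h/D) * D^2 = h * D := by field_simp
        have f3 : (h/D) * (-(‖b - m‖^2/2)) ≤ (h/D) * ⟪p - m, m - b⟫ :=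
          mul_le_mul_of_nonneg_left e3 (le_of_lt (div_pos hh0 hD0))
        have f4 : -((‖p - b‖^2 - D^2 + ε*h)/2) ≤ (h/D) * ⟪p - m, m - b⟫ := by
          have f5 : (h/D) * (-(‖b - m‖^2/2)) = -((h/D * ‖b - m‖^2)/2) := by ring
          rw [f5] at f3
          linarith
        have f6 : (h/D) * (D^2 + ⟪p - m, m - b⟫) = h*D + (h/D) * ⟪p - m, m - b⟫ := by
          rw [mul_add, f2]
        have e5 : (D + h)^2 - ε*h ≤ ‖polySeq M r hreach h q (k+1) - b‖^2 := by
          rw [e1, e2, f6, f1]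
          linarith [f4]
        have hc'0 : 0 ≤ D + h - ε*h/d₀ := by
          have e6 : ε*h/d₀ ≤ h := by
            rw [div_le_iff₀ hd₀]
            linarith [mul_le_mul_of_nonneg_right hεd hh0.le]
          linarith
        have hc'sq : (D + h - ε*h/d₀)^2 ≤ (D+h)^2 - ε*h := by
          have g1 : (ε*h/d₀) * d₀ = ε*h := by field_simp
          have g2 : (0:ℝ) ≤ ε*h/d₀ := by positivity
          have g3 : ε*h/d₀ ≤ d₀ := by
            rw [div_le_iff₀ hd₀]
            linarith [hεh]
          have g4 : (ε*h/d₀) * (ε*h/d₀) ≤ (ε*h/d₀) * d₀ := mul_le_mul_of_nonneg_left g3 g2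
          have g5 : d₀ * (ε*h/d₀) ≤ (D+h) * (ε*h/d₀) :=
            mul_le_mul_of_nonneg_right (by linarith) g2
          linarith [g1, g4, g5]
        rw [dist_eq_norm]
        exact le_of_sq_le_sq' hc'0 (norm_nonneg _) (le_trans hc'sq e5)
      refine ⟨?_, ?_, ?_⟩
      · have t1 := dist_triangle (polySeq M r hreach h q (k+1)) p q
        rw [hstepd] at t1
        push_cast
        linarith
      · have t2 : dist (polySeq M r hreach h q (k+1)) m = D + h := by
          rw [hQ, dist_eq_norm]
          have e : p + (h/D) • (p - m) - m = (1 + h/D) • (p - m) := by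
            rw [add_smul, one_smul]; abel
          rw [e, norm_smul, hpm, Real.norm_eq_abs, abs_of_pos (by positivity)]
          field_simp
          try ring
        have t3 := infDist_le_dist_of_mem (x := polySeq M r hreach h q (k+1)) hmM
        rw [t2] at t3
        push_cast
        linarith
      · have hinf : D + h - ε*h/d₀ ≤ infDist (polySeq M r hreach h q (k+1)) M :=
          le_infDist' hM (fun y hy => hlow y hy)
        have t1 : d₀ * (ε*h/d₀) = ε*h := by field_simp
        have t2 := mul_le_mul_of_nonneg_left hinf hd₀.le
        have t4 : d₀*(D + h - ε*h/d₀) = d₀*D + d₀*h - ε*h := by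
          rw [mul_sub, mul_add, t1]
        push_cast
        linarith [t2, ih3, t4]
  obtain ⟨m1, m2, m3⟩ := main n le_rfl
  refine ⟨polySeq M r hreach h q n, ?_, ?_⟩
  · rw [hnh] at m1
    rw [hΔdef] at m1
    exact m1
  · intro b hb
    have h2 : infDist (polySeq M r hreach h q n) M ≤ dist (polySeq M r hreach h q n) b :=
      infDist_le_dist_of_mem hb
    have h3 := mul_le_mul_of_nonneg_left h2 hd₀.le
    have h5 : (n:ℝ) * h = ρ - d₀ := by rw [hnh, hΔdef]
    rw [h5] at m3
    rw [hΔdef]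
    linarith [m3, h3]


/-- Federer's inequality at full scale for proximal normals. -/
lemma sharp {M : Set (EuclideanSpace ℝ (Fin d))} {r : ℝ} (hM : M.Nonempty)
    (hMc : IsClosed M) (hreach : HasReach M r)
    (q m : EuclideanSpace ℝ (Fin d)) (hmM : m ∈ M) (hdist : dist q m = infDist q M)
    (hq0 : 0 < infDist q M) {ρ : ℝ} (hρ : infDist q M < ρ) (hρr : ρ < r)
    (b : EuclideanSpace ℝ (Fin d)) (hb : b ∈ M) :
    2 * ρ * ⟪q - m, b - m⟫ ≤ infDist q M * ‖b - m‖ ^ 2 := by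
  set d₀ := infDist q M with hd₀def
  clear_value d₀
  have hΔ0 : 0 < ρ - d₀ := by linarith
  have hρ0 : 0 < ρ := lt_trans hq0 hρ
  have hqm : ‖q - m‖ = d₀ := by rw [← dist_eq_norm, hdist]
  have hX0 : (0:ℝ) ≤ ‖b - m‖ := norm_nonneg _
  have main : ∀ γ : ℝ, 0 < γ → 2 * ρ * ⟪q - m, b - m⟫ ≤ d₀ * ‖b - m‖^2 + γ * ‖b - m‖^2 := by
    intro γ hγ
    refine le_of_forall_pos_le_add (fun η hη => ?_)
    have hC0 : (0:ℝ) < 2*γ*(ρ - d₀)*ρ + 2*(ρ - d₀)^2*ρ + 1 := by positivity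
    set ε := min d₀ (γ * η / (2*γ*(ρ - d₀)*ρ + 2*(ρ - d₀)^2*ρ + 1)) with hεdef
    have hε0 : 0 < ε := lt_min hq0 (by positivity)
    have hεd₀ : ε ≤ d₀ := min_le_left _ _
    have hεC : ε * (2*γ*(ρ - d₀)*ρ + 2*(ρ - d₀)^2*ρ + 1) ≤ γ * η := by
      have h1 : ε ≤ γ * η / (2*γ*(ρ - d₀)*ρ + 2*(ρ - d₀)^2*ρ + 1) := min_le_right _ _
      rw [le_div_iff₀ hC0] at h1
      exact h1
    clear_value ε
    have hq0' : 0 < infDist q M := by rw [← hd₀def]; exact hq0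
    have hρ' : infDist q M < ρ := by rw [← hd₀def]; exact hρ
    have hεd₀' : ε ≤ infDist q M := by rw [← hd₀def]; exact hεd₀
    obtain ⟨q', hq'1, hq'2⟩ := poly hM hMc hreach q hq0' ρ hρ' hρr ε hε0 hεd₀'
    rw [← hd₀def] at hq'1 hq'2
    -- basic facts
    have hDn : ‖q' - q‖ ≤ ρ - d₀ := by rw [← dist_eq_norm]; exact hq'1
    have hQb : d₀ * ρ - ε * (ρ - d₀) ≤ d₀ * ‖q' - b‖ := by
      have := hq'2 b hb
      rwa [dist_eq_norm] at this
    have hQm : d₀ * ρ - ε * (ρ - d₀) ≤ d₀ * ‖q' - m‖ := by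
      have := hq'2 m hmM
      rwa [dist_eq_norm] at this
    have hA0 : 0 ≤ d₀ * ρ - ε * (ρ - d₀) := by
      have e1 : ε * (ρ - d₀) ≤ d₀ * (ρ - d₀) := mul_le_mul_of_nonneg_right hεd₀ hΔ0.le
      have e2 : (0:ℝ) ≤ d₀^2 := sq_nonneg d₀
      linarith
    have hQmub : ‖q' - m‖ ≤ ρ := by
      have e1 : q' - m = (q' - q) + (q - m) := by abel
      have e2 := norm_add_le (q' - q) (q - m)
      rw [← e1, hqm] at e2
      linarith
    -- identities
    have hE1 : ‖q' - m‖^2 = d₀^2 + 2*⟪q - m, q' - q⟫ + ‖q' - q‖^2 := by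
      have e1 : q' - m = (q - m) + (q' - q) := by abel
      rw [e1, norm_add_sq_real, hqm]
    have hE2 : ⟪q' - m, b - m⟫ = ⟪q - m, b - m⟫ + ⟪q' - q, b - m⟫ := by
      have e1 : q' - m = (q - m) + (q' - q) := by abel
      rw [e1, inner_add_left]
    have hE3 : ‖q' - b‖^2 = ‖q' - m‖^2 - 2*⟪q' - m, b - m⟫ + ‖b - m‖^2 := by
      have e1 : q' - b = (q' - m) - (b - m) := by abel
      rw [e1, norm_sub_sq_real]
    have hE4 : (ρ - d₀) * ⟪q - m, b - m⟫
        - ‖d₀ • (q' - q) - (ρ - d₀) • (q - m)‖ * ‖b - m‖ ≤ d₀ * ⟪q' - q, b - m⟫ := by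
      have e1 : d₀ • (q' - q) = (ρ - d₀) • (q - m) + (d₀ • (q' - q) - (ρ - d₀) • (q - m)) := by
        abel
      have e2 : d₀ * ⟪q' - q, b - m⟫ = ⟪d₀ • (q' - q), b - m⟫ := by
        rw [real_inner_smul_left]
      have e3 : ⟪d₀ • (q' - q), b - m⟫
          = (ρ - d₀) * ⟪q - m, b - m⟫ + ⟪d₀ • (q' - q) - (ρ - d₀) • (q - m), b - m⟫ := by
        nth_rewrite 1 [e1]
        rw [inner_add_left, real_inner_smul_left]
      have e4 : -(‖d₀ • (q' - q) - (ρ - d₀) • (q - m)‖ * ‖b - m‖)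
          ≤ ⟪d₀ • (q' - q) - (ρ - d₀) • (q - m), b - m⟫ := by
        have := abs_real_inner_le_norm (d₀ • (q' - q) - (ρ - d₀) • (q - m)) (b - m)
        have h2 := neg_abs_le ⟪d₀ • (q' - q) - (ρ - d₀) • (q - m), b - m⟫
        linarith
      rw [e2, e3]
      linarith
    have hE5 : ‖d₀ • (q' - q) - (ρ - d₀) • (q - m)‖^2
        = d₀^2 * ‖q' - q‖^2 - 2*(d₀*(ρ - d₀))*⟪q - m, q' - q⟫ + (ρ - d₀)^2 * d₀^2 := by
      rw [norm_sub_sq_real, norm_smul, norm_smul, real_inner_smul_left, real_inner_smul_right,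
        Real.norm_eq_abs, Real.norm_eq_abs, abs_of_pos hq0, abs_of_pos hΔ0, hqm,
        real_inner_comm (q' - q) (q - m)]
      ring
    -- bound on W²
    have hDn2 : ‖q' - q‖^2 ≤ (ρ - d₀)^2 := pow_le_pow_left₀ (norm_nonneg _) hDn 2
    have hQm2 : (d₀ * ρ - ε * (ρ - d₀))^2 ≤ (d₀ * ‖q' - m‖)^2 := pow_le_pow_left₀ hA0 hQm 2
    have hQb2 : (d₀ * ρ - ε * (ρ - d₀))^2 ≤ (d₀ * ‖q' - b‖)^2 := pow_le_pow_left₀ hA0 hQb 2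
    have hQmub2 : (d₀ * ‖q' - m‖)^2 ≤ (d₀ * ρ)^2 := by
      have h1 : d₀ * ‖q' - m‖ ≤ d₀ * ρ := mul_le_mul_of_nonneg_left hQmub hq0.le
      exact pow_le_pow_left₀ (by positivity) h1 2
    have hWsq : d₀ * ‖d₀ • (q' - q) - (ρ - d₀) • (q - m)‖^2 ≤ 2*ε*(ρ - d₀)^2*d₀*ρ := by
      have p1 : d₀^3 * ‖q' - q‖^2 ≤ d₀^3 * (ρ - d₀)^2 :=
        mul_le_mul_of_nonneg_left hDn2 (by positivity)
      have p2 : d₀^2*(ρ - d₀) * ‖q' - q‖^2 ≤ d₀^2*(ρ - d₀) * (ρ - d₀)^2 :=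
        mul_le_mul_of_nonneg_left hDn2 (by positivity)
      have p3 : (ρ - d₀) * (d₀ * ρ - ε * (ρ - d₀))^2 ≤ (ρ - d₀) * (d₀ * ‖q' - m‖)^2 :=
        mul_le_mul_of_nonneg_left hQm2 hΔ0.le
      have p4 : 0 ≤ ε^2 * (ρ - d₀)^3 := by positivity
      have p5 : d₀ * ‖d₀ • (q' - q) - (ρ - d₀) • (q - m)‖^2
          = d₀^3 * ‖q' - q‖^2 - 2*(d₀^2*(ρ - d₀))*⟪q - m, q' - q⟫ + (ρ - d₀)^2 * d₀^3 := by
        rw [hE5]; ring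
      have p6 : d₀^2*(ρ - d₀)*(2*⟪q - m, q' - q⟫)
          = d₀^2*(ρ - d₀)*(‖q' - m‖^2 - d₀^2 - ‖q' - q‖^2) := by
        rw [hE1]; ring
      linarith [p1, p2, p3, p4, p5, p6]
    -- bound on J
    have hE6 : d₀^2*(2*⟪q' - m, b - m⟫) ≤ d₀^2*‖b - m‖^2 + 2*ε*(ρ - d₀)*d₀*ρ := by
      have p1 : d₀^2*(2*⟪q' - m, b - m⟫)
          = (d₀*‖q' - m‖)^2 + d₀^2*‖b - m‖^2 - (d₀*‖q' - b‖)^2 := by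
        have e1 : 2*⟪q' - m, b - m⟫ = ‖q' - m‖^2 + ‖b - m‖^2 - ‖q' - b‖^2 := by
          rw [hE3]; ring
        rw [e1]; ring
      linarith [p1, hQb2, hQmub2, sq_nonneg (ε*(ρ - d₀))]
    -- combine: ρ * I ≤ d₀ * J + W * X
    have hE7 : ρ * ⟪q - m, b - m⟫ ≤ d₀ * ⟪q' - m, b - m⟫
        + ‖d₀ • (q' - q) - (ρ - d₀) • (q - m)‖ * ‖b - m‖ := by
      have p1 : d₀ * ⟪q' - m, b - m⟫ = d₀ * ⟪q - m, b - m⟫ + d₀ * ⟪q' - q, b - m⟫ := by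
        rw [hE2]; ring
      linarith [hE4]
    -- AM-GM
    have hAM : 2*γ*(‖d₀ • (q' - q) - (ρ - d₀) • (q - m)‖ * ‖b - m‖)
        ≤ γ^2*‖b - m‖^2 + ‖d₀ • (q' - q) - (ρ - d₀) • (q - m)‖^2 := by
      nlinarith [sq_nonneg (γ * ‖b - m‖ - ‖d₀ • (q' - q) - (ρ - d₀) • (q - m)‖)]
    -- multiply everything
    have hfin : (γ*d₀^2) * (2*ρ*⟪q - m, b - m⟫)
        ≤ (γ*d₀^2) * (d₀*‖b - m‖^2 + γ*‖b - m‖^2 + η) := by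
      have m1 : (2*γ*d₀^2) * (ρ*⟪q - m, b - m⟫) ≤ (2*γ*d₀^2) * (d₀ * ⟪q' - m, b - m⟫
          + ‖d₀ • (q' - q) - (ρ - d₀) • (q - m)‖ * ‖b - m‖) :=
        mul_le_mul_of_nonneg_left hE7 (by positivity)
      have m2 : (γ*d₀) * (d₀^2*(2*⟪q' - m, b - m⟫))
          ≤ (γ*d₀) * (d₀^2*‖b - m‖^2 + 2*ε*(ρ - d₀)*d₀*ρ) :=
        mul_le_mul_of_nonneg_left hE6 (by positivity)
      have m3 : d₀^2 * (2*γ*(‖d₀ • (q' - q) - (ρ - d₀) • (q - m)‖ * ‖b - m‖))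
          ≤ d₀^2 * (γ^2*‖b - m‖^2 + ‖d₀ • (q' - q) - (ρ - d₀) • (q - m)‖^2) :=
        mul_le_mul_of_nonneg_left hAM (by positivity)
      have m4 : d₀ * (d₀ * ‖d₀ • (q' - q) - (ρ - d₀) • (q - m)‖^2)
          ≤ d₀ * (2*ε*(ρ - d₀)^2*d₀*ρ) :=
        mul_le_mul_of_nonneg_left hWsq hq0.le
      have m5 : ε*(2*γ*(ρ - d₀)*ρ + 2*(ρ - d₀)^2*ρ) ≤ γ * η := by
        linarith [hεC, hε0.le]
      have m6 : d₀^2 * (ε*(2*γ*(ρ - d₀)*ρ + 2*(ρ - d₀)^2*ρ))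
          ≤ d₀^2 * (γ * η) := by
        have := mul_le_mul_of_nonneg_left m5 (by positivity : (0:ℝ) ≤ d₀^2)
        linarith
      linarith [m1, m2, m3, m4, m6]
    have := le_of_mul_le_mul_left hfin (by positivity : (0:ℝ) < γ*d₀^2)
    linarith
  refine le_of_forall_pos_le_add (fun η hη => ?_)
  have hden : (0:ℝ) < ‖b - m‖^2 + 1 := by positivity
  have hm1 := main (η / (‖b - m‖^2 + 1)) (by positivity)
  have hm2 : (η / (‖b - m‖^2 + 1)) * ‖b - m‖^2 ≤ η := by
    rw [div_mul_eq_mul_div, div_le_iff₀ hden]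
    nlinarith
  linarith


/-- First-order orthogonality modulus from tangent cone orthogonality. -/
lemma modulus {M : Set (EuclideanSpace ℝ (Fin d))} (y : EuclideanSpace ℝ (Fin d))
    (w : EuclideanSpace ℝ (Fin d))
    (horth : ∀ v ∈ tangentConeAt ℝ M y, ⟪w, v⟫ = 0) {ε : ℝ} (hε : 0 < ε) :
    ∃ τ > 0, ∀ m ∈ M, ‖m - y‖ ≤ τ → ⟪w, m - y⟫ ≤ ε * ‖m - y‖ := by
  by_contra hcon
  push_neg at hcon
  have H : ∀ k : ℕ, ∃ m, m ∈ M ∧ ‖m - y‖ ≤ 1/((k:ℝ)+1) ∧ ε * ‖m - y‖ < ⟪w, m - y⟫ := by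
    intro k
    obtain ⟨m, hm1, hm2, hm3⟩ := hcon (1/((k:ℝ)+1)) (by positivity)
    exact ⟨m, hm1, hm2, hm3⟩
  choose m hmM hmle hmlt using H
  have hmne : ∀ k, m k - y ≠ 0 := by
    intro k h0
    have h1 := hmlt k
    rw [h0] at h1
    simp at h1
  have hnorm0 : ∀ k, (0:ℝ) < ‖m k - y‖ := fun k => norm_pos_iff.2 (hmne k)
  have hχs : ∀ k, (‖m k - y‖)⁻¹ • (m k - y) ∈ Metric.sphere (0 : EuclideanSpace ℝ (Fin d)) 1 := by
    intro k
    rw [mem_sphere_zero_iff_norm, norm_smul, Real.norm_eq_abs,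
      abs_of_pos (inv_pos.2 (hnorm0 k)), inv_mul_cancel₀ (ne_of_gt (hnorm0 k))]
  obtain ⟨χ', hχ'mem, φ, hφ, hconv⟩ := (isCompact_sphere (0 : EuclideanSpace ℝ (Fin d)) 1).tendsto_subseq hχs
  have htan : χ' ∈ tangentConeAt ℝ M y := by
    refine mem_tangentConeAt_of_seq Filter.atTop (fun k => (‖m (φ k) - y‖)⁻¹) (fun k => m (φ k) - y)
      (tangentConeAt.lim_zero Filter.atTop ?_ hconv) ?_ ?_
    swap
    · refine Filter.Eventually.of_forall (fun k => ?_)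
      have : y + (m (φ k) - y) = m (φ k) := by abel
      rw [this]
      exact hmM (φ k)
    · have hφmono : ∀ k : ℕ, ((k:ℝ)+1) ≤ ‖(‖m (φ k) - y‖)⁻¹‖ := by
        intro k
        have h2 := hnorm0 (φ k)
        have hk1 : 1/((φ k : ℝ)+1) ≤ 1/((k:ℝ)+1) := by
          apply one_div_le_one_div_of_le (by positivity)
          have : (k:ℝ) ≤ (φ k : ℝ) := by exact_mod_cast hφ.le_apply
          linarith
        have h3 : ‖m (φ k) - y‖ ≤ 1/((k:ℝ)+1) := le_trans (hmle (φ k)) hk1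
        rw [Real.norm_eq_abs, abs_of_pos (inv_pos.2 h2)]
        rw [le_inv_comm₀ (by positivity) h2]
        rwa [← one_div]
      apply Filter.tendsto_atTop_mono hφmono
      apply Filter.tendsto_atTop_add_const_right
      exact tendsto_natCast_atTop_atTop
    · exact hconv
  have h0 := horth χ' htan
  have hlb : ∀ k, ε ≤ ⟪w, (‖m (φ k) - y‖)⁻¹ • (m (φ k) - y)⟫ := by
    intro k
    have h1 := (hmlt (φ k)).le
    have h2 := hnorm0 (φ k)
    rw [real_inner_smul_right]
    have h3 := mul_le_mul_of_nonneg_left h1 (le_of_lt (inv_pos.2 h2))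
    have h4 : (‖m (φ k) - y‖)⁻¹ * (ε * ‖m (φ k) - y‖) = ε := by field_simp
    linarith
  have hlim : Filter.Tendsto (fun k => ⟪w, (‖m (φ k) - y‖)⁻¹ • (m (φ k) - y)⟫)
      Filter.atTop (nhds ⟪w, χ'⟫) := Filter.Tendsto.inner tendsto_const_nhds hconv
  have hfin := le_of_tendsto_of_tendsto' tendsto_const_nhds hlim hlb
  rw [h0] at hfin
  linarith

/-- Federer's inequality for the given orthogonal unit field direction. -/
lemma heart {M : Set (EuclideanSpace ℝ (Fin d))} {r : ℝ} (hM : M.Nonempty)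
    (hMc : IsClosed M) (hreach : HasReach M r) (hr : 0 < r)
    (y : EuclideanSpace ℝ (Fin d)) (hy : y ∈ M) (w : EuclideanSpace ℝ (Fin d)) (hw : ‖w‖ = 1)
    (horth : ∀ v ∈ tangentConeAt ℝ M y, ⟪w, v⟫ = 0)
    (b : EuclideanSpace ℝ (Fin d)) (hb : b ∈ M) :
    2 * r * ⟪w, b - y⟫ ≤ ‖b - y‖ ^ 2 := by
  have key : ∀ ρ : ℝ, 0 < ρ → ρ < r → 2 * ρ * ⟪w, b - y⟫ ≤ ‖b - y‖ ^ 2 := by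
    intro ρ hρ0 hρr
    refine le_of_forall_pos_le_add (fun η hη => ?_)
    have hC0 : (0:ℝ) < 4*‖b - y‖ + 4 + 4*r + 4*r*‖b - y‖ := by positivity
    set ε' := min (1/4 : ℝ) (η / (4*‖b - y‖ + 4 + 4*r + 4*r*‖b - y‖)) with hε'def
    have hε'0 : 0 < ε' := lt_min (by norm_num) (by positivity)
    have hε'14 : ε' ≤ 1/4 := min_le_left _ _
    have hε'C : ε' * (4*‖b - y‖ + 4 + 4*r + 4*r*‖b - y‖) ≤ η := by
      have h1 : ε' ≤ η / (4*‖b - y‖ + 4 + 4*r + 4*r*‖b - y‖) := min_le_right _ _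
      rw [le_div_iff₀ hC0] at h1
      exact h1
    clear_value ε'
    obtain ⟨τ', hτ'0, hmod⟩ := modulus (M := M) y w horth hε'0
    set τ := min (τ'/2) (min (ρ/2) 1) with hτdef
    have hτ0 : 0 < τ := lt_min (by linarith) (lt_min (by linarith) one_pos)
    have hττ' : 2*τ ≤ τ' := by
      have := min_le_left (τ'/2) (min (ρ/2) 1)
      rw [← hτdef] at this
      linarith
    have hτρ : τ ≤ ρ/2 := le_trans (min_le_right _ _) (min_le_left _ _)
    have hτ1 : τ ≤ 1 := le_trans (min_le_right _ _) (min_le_right _ _)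
    clear_value τ
    have hqτy : dist (y + τ • w) y = τ := by
      rw [dist_eq_norm]
      have e1 : y + τ • w - y = τ • w := by abel
      rw [e1, norm_smul, Real.norm_eq_abs, abs_of_pos hτ0, hw, mul_one]
    have hδub : infDist (y + τ • w) M ≤ τ := by
      have := infDist_le_dist_of_mem (x := y + τ • w) hy
      rwa [hqτy] at this
    have hδr : infDist (y + τ • w) M < r := lt_of_le_of_lt hδub (by linarith)
    obtain ⟨mτ, hmτM, hmτd⟩ := (hreach _ hδr).exists
    have hδnn : (0:ℝ) ≤ infDist (y + τ • w) M := infDist_nonneg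
    have henorm : ‖mτ - y‖ ≤ 2*τ := by
      have e1 : ‖mτ - y‖ ≤ ‖mτ - (y + τ • w)‖ + ‖(y + τ • w) - y‖ := by
        have e2 : mτ - y = (mτ - (y + τ • w)) + ((y + τ • w) - y) := by abel
        rw [e2]; exact norm_add_le _ _
      have e3 : ‖mτ - (y + τ • w)‖ = infDist (y + τ • w) M := by
        rw [← hmτd, dist_eq_norm, norm_sub_rev]
      have e4 : ‖(y + τ • w) - y‖ = τ := by rw [← dist_eq_norm, hqτy]
      rw [e3, e4] at e1
      linarith
    have hid1 : (y + τ • w) - mτ = τ • w - (mτ - y) := by abel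
    have hstep1 : ‖mτ - y‖^2 ≤ 2*τ*⟪w, mτ - y⟫ := by
      rcases eq_or_lt_of_le hδnn with h0 | hδpos
      · have e1 : dist (y + τ • w) mτ = 0 := by rw [hmτd, ← h0]
        have e2 : y + τ • w = mτ := by rwa [dist_eq_zero] at e1
        have e3 : mτ - y = τ • w := by rw [← e2]; abel
        rw [e3, norm_smul, real_inner_smul_right, real_inner_self_eq_norm_sq, Real.norm_eq_abs,
          abs_of_pos hτ0, hw]
        nlinarith [hτ0.le]
      · have hδρ : infDist (y + τ • w) M < ρ := lt_of_le_of_lt hδub (by linarith)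
        have hsh := sharp hM hMc hreach (y + τ • w) mτ hmτM hmτd hδpos hδρ hρr y hy
        have hi : ⟪(y + τ • w) - mτ, y - mτ⟫ = ‖mτ - y‖^2 - τ*⟪w, mτ - y⟫ := by
          have e1 : y - mτ = -(mτ - y) := by abel
          rw [hid1, e1, inner_neg_right, inner_sub_left, real_inner_smul_left,
            real_inner_self_eq_norm_sq]
          ring
        rw [hi] at hsh
        have e5 : ‖y - mτ‖^2 = ‖mτ - y‖^2 := by rw [norm_sub_rev]
        rw [e5] at hsh
        have e6 : infDist (y + τ • w) M * ‖mτ - y‖^2 ≤ ρ * ‖mτ - y‖^2 :=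
          mul_le_mul_of_nonneg_right (by linarith) (sq_nonneg _)
        have e7 : ρ * ‖mτ - y‖^2 ≤ ρ * (2*τ*⟪w, mτ - y⟫) := by linarith [hsh, e6]
        exact le_of_mul_le_mul_left e7 hρ0
    have hmod1 : ⟪w, mτ - y⟫ ≤ ε' * ‖mτ - y‖ := hmod mτ hmτM (by linarith)
    have hesmall : ‖mτ - y‖ ≤ 2*ε'*τ := by
      rcases eq_or_lt_of_le (norm_nonneg (mτ - y)) with h0 | hpos
      · rw [← h0]; positivity
      · have h1 : ‖mτ - y‖ * ‖mτ - y‖ ≤ (2*ε'*τ) * ‖mτ - y‖ := by nlinarith [hstep1, hmod1, hτ0.le]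
        exact le_of_mul_le_mul_right h1 hpos
    have hδpos : 0 < infDist (y + τ • w) M := by
      rcases eq_or_lt_of_le hδnn with h0 | hpos
      · exfalso
        have e1 : dist (y + τ • w) mτ = 0 := by rw [hmτd, ← h0]
        have e2 : y + τ • w = mτ := by rwa [dist_eq_zero] at e1
        have e3 : mτ - y = τ • w := by rw [← e2]; abel
        have e4 : ‖mτ - y‖ = τ := by
          rw [e3, norm_smul, Real.norm_eq_abs, abs_of_pos hτ0, hw, mul_one]
        rw [e4] at hesmall
        nlinarith [hτ0]
      · exact hpos
    have hδρ : infDist (y + τ • w) M < ρ := lt_of_le_of_lt hδub (by linarith)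
    have hsh2 := sharp hM hMc hreach (y + τ • w) mτ hmτM hmτd hδpos hδρ hρr b hb
    have hi2 : ⟪(y + τ • w) - mτ, b - mτ⟫
        = τ*⟪w, b - y⟫ - τ*⟪w, mτ - y⟫ - ⟪mτ - y, b - y⟫ + ‖mτ - y‖^2 := by
      have e1 : b - mτ = (b - y) - (mτ - y) := by abel
      rw [hid1, e1]
      simp only [inner_sub_left, inner_sub_right, real_inner_smul_left,
        real_inner_self_eq_norm_sq, norm_sub_sq_real]
      rw [real_inner_comm mτ y]
      ring
    rw [hi2] at hsh2
    -- bounds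
    have hbm : ‖b - mτ‖ ≤ ‖b - y‖ + 2*ε'*τ := by
      have e1 : b - mτ = (b - y) - (mτ - y) := by abel
      have e2 := norm_sub_le (b - y) (mτ - y)
      rw [← e1] at e2
      linarith
    have hbm2 : ‖b - mτ‖^2 ≤ (‖b - y‖ + 2*ε'*τ)^2 :=
      pow_le_pow_left₀ (norm_nonneg _) hbm 2
    have hip : ⟪mτ - y, b - y⟫ ≤ 2*ε'*τ*‖b - y‖ := by
      have e1 := real_inner_le_norm (mτ - y) (b - y)
      have e2 : ‖mτ - y‖ * ‖b - y‖ ≤ (2*ε'*τ) * ‖b - y‖ :=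
        mul_le_mul_of_nonneg_right hesmall (norm_nonneg _)
      linarith
    have hwem : ⟪w, mτ - y⟫ ≤ 2*ε'*ε'*τ := by
      have e1 : ε' * ‖mτ - y‖ ≤ ε' * (2*ε'*τ) := mul_le_mul_of_nonneg_left hesmall hε'0.le
      nlinarith [hmod1]
    have hwem' : 0 ≤ ⟪w, mτ - y⟫ := by
      by_contra hneg
      push_neg at hneg
      have e1 : τ * ⟪w, mτ - y⟫ < 0 := mul_neg_of_pos_of_neg hτ0 hneg
      have e2 := sq_nonneg ‖mτ - y‖
      linarith [hstep1]
    -- multiplied main bound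
    have hτbound : τ * (2*ρ*⟪w, b - y⟫)
        ≤ τ * ((‖b - y‖ + 2*ε'*τ)^2 + 4*ρ*ε'*ε'*τ + 4*ρ*ε'*‖b - y‖) := by
      have m1 : infDist (y + τ • w) M * ‖b - mτ‖^2 ≤ τ * (‖b - y‖ + 2*ε'*τ)^2 := by
        have e1 : infDist (y + τ • w) M * ‖b - mτ‖^2 ≤ τ * ‖b - mτ‖^2 :=
          mul_le_mul_of_nonneg_right hδub (sq_nonneg _)
        have e2 : τ * ‖b - mτ‖^2 ≤ τ * (‖b - y‖ + 2*ε'*τ)^2 :=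
          mul_le_mul_of_nonneg_left hbm2 hτ0.le
        linarith
      have m2 : 2*ρ*(τ*⟪w, mτ - y⟫) ≤ 2*ρ*(τ*(2*ε'*ε'*τ)) := by
        have e1 := mul_le_mul_of_nonneg_left (mul_le_mul_of_nonneg_left hwem hτ0.le)
          (by positivity : (0:ℝ) ≤ 2*ρ)
        linarith [e1]
      have m3 : 2*ρ*⟪mτ - y, b - y⟫ ≤ 2*ρ*(2*ε'*τ*‖b - y‖) :=
        mul_le_mul_of_nonneg_left hip (by positivity)
      have m4 : 0 ≤ 2*ρ*‖mτ - y‖^2 := by positivity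
      linarith [hsh2, m1, m2, m3, m4]
    have hmain : 2*ρ*⟪w, b - y⟫ ≤ (‖b - y‖ + 2*ε'*τ)^2 + 4*ρ*ε'*ε'*τ + 4*ρ*ε'*‖b - y‖ :=
      le_of_mul_le_mul_left (by linarith [hτbound]) hτ0
    -- error bookkeeping
    have f1 : ε'*τ*‖b - y‖ ≤ ε'*‖b - y‖ := by
      have e1 : ε'*τ ≤ ε'*1 := mul_le_mul_of_nonneg_left hτ1 hε'0.le
      have := mul_le_mul_of_nonneg_right e1 (norm_nonneg (b - y))
      linarith [this]
    have f2 : ε'*ε'*τ*τ ≤ ε' := by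
      have a1 : ε'*ε' ≤ ε'*1 := mul_le_mul_of_nonneg_left (by linarith) hε'0.le
      have a2 : τ*τ ≤ 1*1 := mul_le_mul hτ1 hτ1 hτ0.le (by norm_num)
      have a3 : (ε'*ε')*(τ*τ) ≤ (ε'*1)*(1*1) :=
        mul_le_mul a1 a2 (by positivity) (by linarith)
      linarith [a3]
    have f3 : ρ*(ε'*ε')*τ ≤ r*ε' := by
      have a1 : (ε'*ε')*τ ≤ (ε'*1)*1 :=
        mul_le_mul (mul_le_mul_of_nonneg_left (by linarith) hε'0.le) hτ1 hτ0.le (by positivity)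
      have a2 : ρ*((ε'*ε')*τ) ≤ r*((ε'*ε')*τ) :=
        mul_le_mul_of_nonneg_right hρr.le (by positivity)
      have a3 : r*((ε'*ε')*τ) ≤ r*(ε'*1*1) := mul_le_mul_of_nonneg_left a1 hr.le
      linarith [a2, a3]
    have f4 : ρ*ε'*‖b - y‖ ≤ r*ε'*‖b - y‖ := by
      have e1 : ρ*ε' ≤ r*ε' := mul_le_mul_of_nonneg_right hρr.le hε'0.le
      exact mul_le_mul_of_nonneg_right e1 (norm_nonneg _)
    have hexp : (‖b - y‖ + 2*ε'*τ)^2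
        = ‖b - y‖^2 + 4*(ε'*τ*‖b - y‖) + 4*(ε'*ε'*τ*τ) := by ring
    linarith [hmain, hexp, f1, f2, f3, f4, hε'C]
  by_cases hI : ⟪w, b - y⟫ ≤ 0
  · have h1 : 2*r*⟪w, b - y⟫ ≤ 0 := mul_nonpos_of_nonneg_of_nonpos (by positivity) hI
    exact le_trans h1 (sq_nonneg _)
  · push_neg at hI
    by_contra hcon
    push_neg at hcon
    set ρ₀ := (‖b - y‖^2/(2*⟪w, b - y⟫) + r)/2 with hρ₀def
    have h1 : ‖b - y‖^2/(2*⟪w, b - y⟫) < r := by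
      rw [div_lt_iff₀ (by positivity)]
      nlinarith [hcon]
    have h2 : (0:ℝ) ≤ ‖b - y‖^2/(2*⟪w, b - y⟫) := by positivity
    have hρ₀pos : 0 < ρ₀ := by rw [hρ₀def]; linarith
    have hρ₀r : ρ₀ < r := by rw [hρ₀def]; linarith
    have h3 := key ρ₀ hρ₀pos hρ₀r
    have h4 : ‖b - y‖^2/(2*⟪w, b - y⟫) < ρ₀ := by rw [hρ₀def]; linarith
    rw [div_lt_iff₀ (by positivity)] at h4
    nlinarith [h3, h4]

end Reach14

/-- Second fundamental form bound: for a local unit normal field N of a set M of reach r,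
⟨Y, D_Y N⟩ / ⟨Y, Y⟩ ≤ 1/r for tangent vectors Y. -/
theorem stmt14 {d : ℕ} (M : Set (EuclideanSpace ℝ (Fin d))) (r : ℝ) (hr : 0 < r)
    (hreach : HasReach M r) (x : EuclideanSpace ℝ (Fin d)) (hx : x ∈ M)
    (U : Set (EuclideanSpace ℝ (Fin d))) (hU : U ∈ nhds x)
    (N : EuclideanSpace ℝ (Fin d) → EuclideanSpace ℝ (Fin d))
    (hN : ContDiffAt ℝ 1 N x)
    (hunit : ∀ y ∈ M ∩ U, ‖N y‖ = 1)
    (hnormal : ∀ y ∈ M ∩ U, ∀ v ∈ tangentConeAt ℝ M y, (inner ℝ (N y) v : ℝ) = 0)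
    (Y : EuclideanSpace ℝ (Fin d)) (hY : Y ∈ tangentConeAt ℝ M x) (hYne : Y ≠ 0) :
    (inner ℝ Y (fderiv ℝ N x Y) : ℝ) / (inner ℝ Y Y : ℝ) ≤ 1 / r := by
  classical
  open Reach14 Filter Asymptotics in
  have hM : M.Nonempty := ⟨x, hx⟩
  have hMc : IsClosed M := Reach14.closed_of_reach hM hr hreach
  obtain ⟨c, dd, hd0', hmem, hcd⟩ := mem_tangentConeAt_iff_exists_seq.1 hY
  set L := fderiv ℝ N x with hL
  have hdiff : DifferentiableAt ℝ N x := hN.differentiableAt one_ne_zero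
  have hF : HasFDerivAt N L x := hdiff.hasFDerivAt
  have hlittle : (fun h => N (x + h) - N x - L h) =o[nhds 0] fun h => h :=
    hasFDerivAt_iff_isLittleO_nhds_zero.1 hF
  have hd0 : Filter.Tendsto dd Filter.atTop (nhds 0) := hd0'
  have hseq : (fun n => N (x + dd n) - N x - L (dd n)) =o[Filter.atTop] fun n => dd n :=
    hlittle.comp_tendsto hd0
  have hxd : Filter.Tendsto (fun n => x + dd n) Filter.atTop (nhds x) := by
    have h1 := hd0.const_add x
    simpa using h1
  have hU' : ∀ᶠ n in Filter.atTop, x + dd n ∈ U := hxd.eventually_mem hU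
  have hxU : x ∈ U := mem_of_mem_nhds hU
  have hNx : ‖N x‖ = 1 := hunit x ⟨hx, hxU⟩
  open scoped RealInnerProductSpace in
  have hHx : ∀ b ∈ M, 2*r*⟪-(N x), b - x⟫ ≤ ‖b - x‖^2 := by
    intro b hb
    refine Reach14.heart hM hMc hreach hr x hx (-(N x)) (by rw [norm_neg, hNx]) ?_ b hb
    intro v hv
    have := hnormal x ⟨hx, hxU⟩ v hv
    rw [inner_neg_left, this, neg_zero]
  have hkey : ∀ᶠ n in Filter.atTop,
      2*r*⟪L (dd n), dd n⟫ ≤ 2*‖dd n‖^2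
        + 2*r*(‖N (x + dd n) - N x - L (dd n)‖ * ‖dd n‖) := by
    filter_upwards [hmem, hU'] with n hn1 hn2
    have hNy : ‖N (x + dd n)‖ = 1 := hunit _ ⟨hn1, hn2⟩
    have h1 : 2*r*⟪-(N x), dd n⟫ ≤ ‖dd n‖^2 := by
      have h2 := hHx (x + dd n) hn1
      rwa [add_sub_cancel_left] at h2
    have h2 : 2*r*⟪N (x + dd n), dd n⟫ ≤ ‖dd n‖^2 := by
      have h3 : ∀ v ∈ tangentConeAt ℝ M (x + dd n), ⟪-(N (x + dd n)), v⟫ = 0 := by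
        intro v hv
        have := hnormal (x + dd n) ⟨hn1, hn2⟩ v hv
        rw [inner_neg_left, this, neg_zero]
      have h4 := Reach14.heart hM hMc hreach hr (x + dd n) hn1 (-(N (x + dd n)))
        (by rw [norm_neg, hNy]) h3 x hx
      have h5 : x - (x + dd n) = -(dd n) := by abel
      rw [h5, inner_neg_neg, norm_neg] at h4
      exact h4
    have hdec : L (dd n) = (N (x + dd n) - N x) - (N (x + dd n) - N x - L (dd n)) := by
      abel
    have h6 : ⟪L (dd n), dd n⟫ = ⟪N (x + dd n), dd n⟫ - ⟪N x, dd n⟫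
        - ⟪N (x + dd n) - N x - L (dd n), dd n⟫ := by
      conv_lhs => rw [hdec]
      simp only [inner_sub_left]
    have h7 : -(‖N (x + dd n) - N x - L (dd n)‖ * ‖dd n‖)
        ≤ ⟪N (x + dd n) - N x - L (dd n), dd n⟫ := by
      have := abs_real_inner_le_norm (N (x + dd n) - N x - L (dd n)) (dd n)
      have h8 := neg_abs_le ⟪N (x + dd n) - N x - L (dd n), dd n⟫
      linarith
    have h9 : ⟪-(N x), dd n⟫ = -⟪N x, dd n⟫ := inner_neg_left _ _
    rw [h9] at h1
    have h10 : 2*r*⟪L (dd n), dd n⟫ = 2*r*⟪N (x + dd n), dd n⟫ - 2*r*⟪N x, dd n⟫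
        - 2*r*⟪N (x + dd n) - N x - L (dd n), dd n⟫ := by rw [h6]; ring
    have h11 : -(2*r*⟪N (x + dd n) - N x - L (dd n), dd n⟫)
        ≤ 2*r*(‖N (x + dd n) - N x - L (dd n)‖ * ‖dd n‖) := by
      have := mul_le_mul_of_nonneg_left h7 (by positivity : (0:ℝ) ≤ 2*r)
      linarith [this]
    linarith [h1, h2, h10, h11]
  open scoped RealInnerProductSpace in
  have hfinal : 2*r*⟪L Y, Y⟫ ≤ 2*‖Y‖^2 := by
    refine le_of_forall_pos_le_add (fun η hη => ?_)
    have hY2 : (0:ℝ) < ‖Y‖^2 := by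
      have := norm_pos_iff.2 hYne
      positivity
    set ε := η / (2*r*‖Y‖^2) with hεdef
    have hε : 0 < ε := by positivity
    have hR := (Asymptotics.isLittleO_iff.mp hseq) hε
    have hev2 : ∀ᶠ n in Filter.atTop,
        2*r*⟪L (c n • dd n), c n • dd n⟫ ≤ 2*‖c n • dd n‖^2 + ε*(2*r*‖c n • dd n‖^2) := by
      filter_upwards [hkey, hR] with n h1 h2
      have hs1 : ⟪L (c n • dd n), c n • dd n⟫ = (c n)^2 * ⟪L (dd n), dd n⟫ := by
        rw [map_smul, real_inner_smul_left, real_inner_smul_right]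
        ring
      have hs2 : ‖c n • dd n‖^2 = (c n)^2 * ‖dd n‖^2 := by
        rw [norm_smul, Real.norm_eq_abs, mul_pow, sq_abs]
      have p1 := mul_le_mul_of_nonneg_left h1 (sq_nonneg (c n))
      have p2 : ‖N (x + dd n) - N x - L (dd n)‖ * ‖dd n‖ ≤ ε * ‖dd n‖ * ‖dd n‖ :=
        mul_le_mul_of_nonneg_right h2 (norm_nonneg _)
      have p3 := mul_le_mul_of_nonneg_left p2 (by positivity : (0:ℝ) ≤ (c n)^2*(2*r))
      rw [hs1, hs2]
      nlinarith [p1, p3]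
    have hLs : Filter.Tendsto (fun n => L (c n • dd n)) Filter.atTop (nhds (L Y)) :=
      (L.continuous.tendsto Y).comp hcd
    have ht1 : Filter.Tendsto (fun n => 2*r*⟪L (c n • dd n), c n • dd n⟫)
        Filter.atTop (nhds (2*r*⟪L Y, Y⟫)) := (hLs.inner hcd).const_mul (2*r)
    have htn : Filter.Tendsto (fun n => ‖c n • dd n‖^2) Filter.atTop (nhds (‖Y‖^2)) :=
      (hcd.norm).pow 2
    have ht2 : Filter.Tendsto (fun n => 2*‖c n • dd n‖^2 + ε*(2*r*‖c n • dd n‖^2))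
        Filter.atTop (nhds (2*‖Y‖^2 + ε*(2*r*‖Y‖^2))) :=
      (htn.const_mul 2).add ((htn.const_mul (2*r)).const_mul ε)
    have hle := le_of_tendsto_of_tendsto ht1 ht2 hev2
    have hεη : ε*(2*r*‖Y‖^2) = η := by
      rw [hεdef]
      field_simp
    linarith [hle, hεη.le, hεη.ge]
  open scoped RealInnerProductSpace in
  have hYY : (inner ℝ Y Y : ℝ) = ‖Y‖^2 := real_inner_self_eq_norm_sq Y
  have hsym : (inner ℝ Y (L Y) : ℝ) = ⟪L Y, Y⟫ := real_inner_comm _ _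
  have hY2 : (0:ℝ) < ‖Y‖^2 := by
    have := norm_pos_iff.2 hYne
    positivity
  rw [hYY, hsym, div_le_div_iff₀ hY2 hr]
  open scoped RealInnerProductSpace in
  nlinarith [hfinal]
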